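/- Let U ⊆ ℂ be an open set containing the closed unit disk {z : ℂ | |z| ≤ 1}, let γ : ℂ → ℂ be holomorphic on U and injective on the closed unit disk, and suppose the set of zeros of γ' on the unit circle is a finite set {exp(iθ₁), …, exp(iθ_N)}. Let F : ℂ → ℝ be a measurable function such that (i) the function θ ↦ F(γ(exp(iθ)))·|γ'(exp(iθ))| is Lebesgue integrable on [0, 2π] (integrability of F on the image curve with respect to arc length), and (ii) for each i ∈ {1, …, N} there exists ε_i > 0 such that θ ↦ F(γ(exp(iθ))) is bounded on (θ_i − ε_i, θ_i + ε_i), i.e., the points where F is unbounded on the curve do not coincide with the points where the curve is non-differentiable. Then the function θ ↦ F(γ(exp(iθ))) is Lebesgue integrable on [0, 2π]. -/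

import Mathlib

open MeasureTheory Filter Set

/-- If `γ` maps the unit circle conformally onto a simple closed curve which
may be non-differentiable at finitely many points (the zeros `e^{iθᵢ}` of `γ'` on the circle),
`F` is integrable on the image curve with respect to arc length, and `F` is bounded near each
of the points of the curve corresponding to the zeros of `γ'`, then the induced boundary
function `θ ↦ F(γ(e^{iθ}))` is integrable on `[0, 2π]`. -/
theorem integrable_pullback_of_arcLength_integrable_nondiffble_curve
    (U : Set ℂ) (hU : IsOpen U) (hsub : Metric.closedBall (0 : ℂ) 1 ⊆ U)
    (γ : ℂ → ℂ) (hγ : DifferentiableOn ℂ γ U)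
    (hinj : InjOn γ (Metric.closedBall (0 : ℂ) 1))
    (N : ℕ) (θs : Fin N → ℝ)
    (hzeros : ∀ z : ℂ, ‖z‖ = 1 →
      (deriv γ z = 0 ↔ ∃ i : Fin N, z = Complex.exp ((θs i : ℂ) * Complex.I)))
    (F : ℂ → ℝ) (hF : Measurable F)
    (hint : IntervalIntegrable (fun θ : ℝ =>
        F (γ (Complex.exp ((θ : ℂ) * Complex.I))) *
          ‖deriv γ (Complex.exp ((θ : ℂ) * Complex.I))‖)
      volume 0 (2 * Real.pi))
    (hbdd : ∀ i : Fin N, ∃ ε : ℝ, 0 < ε ∧ ∃ M : ℝ,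
      ∀ θ ∈ Ioo (θs i - ε) (θs i + ε),
        |F (γ (Complex.exp ((θ : ℂ) * Complex.I)))| ≤ M) :
    IntervalIntegrable (fun θ : ℝ => F (γ (Complex.exp ((θ : ℂ) * Complex.I))))
      volume 0 (2 * Real.pi) := by
  set e : ℝ → ℂ := fun θ => Complex.exp ((θ : ℂ) * Complex.I) with he
  have habs : ∀ θ : ℝ, ‖e θ‖ = 1 := fun θ => Complex.norm_exp_ofReal_mul_I θ
  have hmem : ∀ θ : ℝ, e θ ∈ U := by
    intro θ; apply hsub
    simp [Metric.mem_closedBall, Complex.dist_eq, habs θ]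
  have hecont : Continuous e := by fun_prop
  have hper : ∀ (θ : ℝ) (k : ℤ), e (θ + 2 * Real.pi * k) = e θ := by
    intro θ k
    have h1 : ((θ + 2 * Real.pi * k : ℝ) : ℂ) * Complex.I
        = (θ : ℂ) * Complex.I + (k : ℂ) * (2 * (Real.pi : ℂ) * Complex.I) := by
      push_cast; ring
    simp only [he, h1, Complex.exp_add, Complex.exp_int_mul_two_pi_mul_I, mul_one]
  set f : ℝ → ℝ := fun θ => F (γ (e θ)) with hf
  have hfm : Measurable f :=
    hF.comp ((hγ.continuousOn.comp_continuous hecont hmem).measurable)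
  have hfper : ∀ (θ : ℝ) (k : ℤ), f (θ + 2 * Real.pi * k) = f θ := fun θ k => by
    simp only [hf, hper]
  choose ε hε Mb hMb using hbdd
  set M : ℝ := ∑ i, |Mb i| with hM
  have hM0 : 0 ≤ M := Finset.sum_nonneg fun i _ => abs_nonneg _
  have hMi : ∀ i, Mb i ≤ M := fun i =>
    (le_abs_self _).trans (Finset.single_le_sum (f := fun j => |Mb j|) (fun j _ => abs_nonneg _) (Finset.mem_univ i))
  set V : Set ℝ := ⋃ i : Fin N, ⋃ k : ℤ,
      Ioo (θs i + 2 * Real.pi * k - ε i) (θs i + 2 * Real.pi * k + ε i) with hV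
  have hVopen : IsOpen V := isOpen_iUnion fun i => isOpen_iUnion fun k => isOpen_Ioo
  have hVbound : ∀ θ ∈ V, |f θ| ≤ M := by
    intro θ hθ
    simp only [hV, mem_iUnion, mem_Ioo] at hθ
    obtain ⟨i, k, h1, h2⟩ := hθ
    have heq : f θ = f (θ - 2 * Real.pi * k) := by
      rw [← hfper (θ - 2 * Real.pi * k) k]; ring_nf
    rw [heq]
    exact (hMb i (θ - 2 * Real.pi * k) ⟨by linarith, by linarith⟩).trans (hMi i)
  set K : Set ℝ := Icc 0 (2 * Real.pi) \ V with hK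
  have hKcomp : IsCompact K := isCompact_Icc.diff hVopen
  have hderiv_cont : Continuous fun θ => ‖deriv γ (e θ)‖ := by
    apply continuous_norm.comp
    exact ((hγ.analyticOnNhd hU).deriv.continuousOn (s := U)).comp_continuous hecont hmem
  have hKne0 : ∀ θ ∈ K, deriv γ (e θ) ≠ 0 := by
    intro θ hθ hzero
    obtain ⟨i, hi⟩ := (hzeros (e θ) (habs θ)).mp hzero
    obtain ⟨n, hn⟩ := Complex.exp_eq_exp_iff_exists_int.mp hi
    have him := congrArg Complex.im hn
    simp only [Complex.add_im, Complex.mul_im, Complex.ofReal_re, Complex.ofReal_im,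
      Complex.I_re, Complex.I_im, Complex.intCast_re, Complex.intCast_im,
      Complex.mul_re, Complex.re_ofNat, Complex.im_ofNat] at him
    have hθeq : θ = θs i + 2 * Real.pi * n := by linarith [him]
    apply hθ.2
    simp only [hV, mem_iUnion, mem_Ioo]
    exact ⟨i, n, by linarith [hε i], by linarith [hε i]⟩
  obtain ⟨c, hc0, hcK⟩ : ∃ c : ℝ, 0 < c ∧ ∀ θ ∈ K, c ≤ ‖deriv γ (e θ)‖ := by
    rcases K.eq_empty_or_nonempty with h | h
    · exact ⟨1, one_pos, by simp [h]⟩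
    · obtain ⟨θ0, hθ0, hmin⟩ := hKcomp.exists_isMinOn h hderiv_cont.continuousOn
      exact ⟨_, norm_pos_iff.mpr (hKne0 θ0 hθ0), fun θ hθ => hmin hθ⟩
  have hgint : IntervalIntegrable
      (fun θ => M + c⁻¹ * |f θ * ‖deriv γ (e θ)‖|) volume 0 (2 * Real.pi) :=
    (intervalIntegrable_const).add (hint.abs.const_mul c⁻¹)
  refine hgint.mono_fun hfm.aestronglyMeasurable.restrict ?_
  filter_upwards [ae_restrict_mem measurableSet_uIoc] with θ hθ
  have hθIcc : θ ∈ Icc 0 (2 * Real.pi) := by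
    rw [uIoc_of_le (by positivity)] at hθ
    exact Ioc_subset_Icc_self hθ
  have habs2 : (0:ℝ) ≤ c⁻¹ * |f θ * ‖deriv γ (e θ)‖| := by positivity
  rw [Real.norm_eq_abs, Real.norm_eq_abs, abs_of_nonneg (add_nonneg hM0 habs2)]
  by_cases hv : θ ∈ V
  · linarith [hVbound θ hv]
  · have hθK : θ ∈ K := ⟨hθIcc, hv⟩
    have hc := hcK θ hθK
    have h1 : |f θ| * c ≤ |f θ * ‖deriv γ (e θ)‖| := by
      rw [abs_mul, abs_of_nonneg (norm_nonneg _)]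
      exact mul_le_mul_of_nonneg_left hc (abs_nonneg _)
    have h2 : |f θ| ≤ c⁻¹ * |f θ * ‖deriv γ (e θ)‖| := by
      rw [← div_eq_inv_mul]
      exact (le_div_iff₀ hc0).mpr h1
    linarith
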